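/- Let f : A → C and g : B → C be ring homomorphisms whose kernels are regular ideals of A and B respectively. Then the fiber product A ×_C B = {(a,b) : f(a) = g(b)} is a Prüfer ring if and only if A and B are Prüfer rings and A ×_C B = A × B. -/

import Mathlib

open scoped Pointwise

/-- A Prüfer ring: every finitely generated regular ideal is invertible
(as a submodule of the total ring of fractions). -/
def IsPruferRing (R : Type*) [CommRing R] : Prop :=
  ∀ I : Ideal R, I.FG → (∃ r ∈ I, r ∈ nonZeroDivisors R) →
    ∃ J : Submodule R (FractionRing R),
      Submodule.map (Algebra.linearMap R (FractionRing R)) I * J = 1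

/-- Internal characterization of Prüfer. -/
def PruferAux (R : Type*) [CommRing R] : Prop :=
  ∀ I : Ideal R, I.FG → (∃ r ∈ I, r ∈ nonZeroDivisors R) →
    ∃ (J : Ideal R) (d : R), d ∈ nonZeroDivisors R ∧ I * J = Ideal.span {d}

section equiv

variable {R : Type*} [CommRing R]

local notation "K" => FractionRing R
local notation "φ" => Algebra.linearMap R (FractionRing R)

lemma map_lin_mul (I J : Ideal R) :
    Submodule.map φ (I * J) = Submodule.map φ I * Submodule.map φ J :=
  Submodule.map_mul I J (Algebra.ofId R (FractionRing R))

lemma map_lin_span (s : Set R) :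
    Submodule.map φ (Ideal.span s) = Submodule.span R (algebraMap R K '' s) :=
  Submodule.map_span _ s

lemma pruferAux_iff : IsPruferRing R ↔ PruferAux R := by
  constructor
  · intro h I hfg hreg
    obtain ⟨J, hJ⟩ := h I hfg hreg
    have h1 : (1 : K) ∈ Submodule.map φ I * J := by
      rw [hJ]; exact Submodule.one_le.mp le_rfl
    obtain ⟨T, T', hT, hT', hmem⟩ := Submodule.mem_span_mul_finite_of_mem_mul h1
    set J₀ : Submodule R K := Submodule.span R (T' : Set K) with hJ₀
    have hJ₀le : J₀ ≤ J := Submodule.span_le.mpr hT'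
    have hIJ₀ : Submodule.map φ I * J₀ = 1 := by
      apply le_antisymm
      · calc Submodule.map φ I * J₀ ≤ Submodule.map φ I * J :=
              mul_le_mul' le_rfl hJ₀le
          _ = 1 := hJ
      · rw [Submodule.one_le]
        have : Submodule.span R ((T : Set K) * (T' : Set K)) ≤ Submodule.map φ I * J₀ := by
          rw [← Submodule.span_mul_span]
          exact mul_le_mul' (Submodule.span_le.mpr hT)
            (Submodule.span_le.mpr Submodule.subset_span)
        exact this hmem
    obtain ⟨b, hb⟩ := IsLocalization.exist_integer_multiples_of_finset (nonZeroDivisors R)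
      (S := K) T'
    set d : R := (b : R)
    -- algebraMap d * y ∈ range φ for y ∈ J₀
    have key : ∀ y ∈ J₀, algebraMap R K d * y ∈ LinearMap.range φ := by
      intro y hy
      refine Submodule.span_induction ?_ ?_ ?_ ?_ hy
      · intro t ht
        obtain ⟨r, hr⟩ := hb t ht
        exact ⟨r, by simpa [Algebra.smul_def] using hr⟩
      · simp
      · intro x y _ _ hx hy
        rw [mul_add]; exact add_mem hx hy
      · intro r x _ hx
        rw [mul_smul_comm]; exact Submodule.smul_mem _ r hx
    set D : Submodule R K := Submodule.span R {algebraMap R K d} with hD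
    have hDJ₀ : D * J₀ ≤ LinearMap.range φ := by
      rw [Submodule.mul_le]
      intro m hm n hn
      obtain ⟨r, rfl⟩ := Submodule.mem_span_singleton.mp hm
      rw [smul_mul_assoc]
      exact Submodule.smul_mem _ r (key n hn)
    refine ⟨Submodule.comap φ (D * J₀), d, b.2, ?_⟩
    have hmapJ : Submodule.map φ (Submodule.comap φ (D * J₀)) = D * J₀ := by
      rw [Submodule.map_comap_eq, inf_eq_right.mpr hDJ₀]
    apply Submodule.map_injective_of_injective
      (f := φ) (IsFractionRing.injective R K)
    rw [map_lin_mul, hmapJ, map_lin_span, Set.image_singleton, ← hD]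
    rw [mul_comm (Submodule.map φ I), mul_assoc, mul_comm J₀, hIJ₀, mul_one]
  · intro h I hfg hreg
    obtain ⟨J, d, hd, hIJ⟩ := h I hfg hreg
    have hu : IsUnit (algebraMap R K d) :=
      IsLocalization.map_units K (⟨d, hd⟩ : nonZeroDivisors R)
    refine ⟨Submodule.span R {(↑hu.unit⁻¹ : K)} * Submodule.map φ J, ?_⟩
    rw [← mul_assoc, mul_comm (Submodule.map φ I), mul_assoc, ← map_lin_mul, hIJ,
      map_lin_span, Set.image_singleton, Submodule.span_mul_span,
      Set.singleton_mul_singleton, IsUnit.val_inv_mul, Submodule.one_eq_span]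

end equiv



section transfer

lemma nzd_map_equiv {R S : Type*} [CommRing R] [CommRing S] (e : R ≃+* S) {r : R}
    (hr : r ∈ nonZeroDivisors R) : e r ∈ nonZeroDivisors S := by
  rw [mem_nonZeroDivisors_iff_right] at hr ⊢
  intro x hx
  have h1 : e.symm x * r = 0 := by
    apply e.injective
    simpa [map_mul] using hx
  have h2 := hr _ h1
  have := congrArg e h2
  simpa using this

lemma PruferAux.of_equiv {R S : Type*} [CommRing R] [CommRing S] (e : R ≃+* S)
    (h : PruferAux R) : PruferAux S := by
  intro I hfg hreg
  obtain ⟨r, hrI, hr⟩ := hreg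
  obtain ⟨J, d, hd, hIJ⟩ := h (I.map (e.symm : S →+* R))
    (hfg.map _)
    ⟨e.symm r, Ideal.mem_map_of_mem _ hrI, nzd_map_equiv e.symm hr⟩
  refine ⟨J.map (e : R →+* S), e d, nzd_map_equiv e hd, ?_⟩
  have := congrArg (Ideal.map (e : R →+* S)) hIJ
  rwa [Ideal.map_mul, Ideal.map_map, Ideal.map_span, Set.image_singleton,
    (by ext x; simp : ((e : R →+* S).comp (e.symm : S →+* R)) = RingHom.id S),
    Ideal.map_id] at this

end transfer

section prod

variable {A B : Type*} [CommRing A] [CommRing B]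

lemma map_fst_prod (I : Ideal A) (J : Ideal B) :
    Ideal.map (RingHom.fst A B) (I.prod J) = I := by
  apply le_antisymm
  · rw [Ideal.map_le_iff_le_comap]
    rintro ⟨a, b⟩ hx
    exact ((Ideal.mem_prod _ _).mp hx).1
  · intro x hx
    exact Ideal.mem_map_of_mem _ (show ((x, 0) : A × B) ∈ I.prod J from
      (Ideal.mem_prod _ _).mpr ⟨hx, J.zero_mem⟩)

lemma map_snd_prod (I : Ideal A) (J : Ideal B) :
    Ideal.map (RingHom.snd A B) (I.prod J) = J := by
  apply le_antisymm
  · rw [Ideal.map_le_iff_le_comap]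
    rintro ⟨a, b⟩ hx
    exact ((Ideal.mem_prod _ _).mp hx).2
  · intro x hx
    exact Ideal.mem_map_of_mem _ (show ((0, x) : A × B) ∈ I.prod J from
      (Ideal.mem_prod _ _).mpr ⟨I.zero_mem, hx⟩)

lemma prod_mul_prod (I I' : Ideal A) (J J' : Ideal B) :
    (I.prod J) * (I'.prod J') = (I * I').prod (J * J') := by
  conv_lhs => rw [Ideal.ideal_prod_eq ((I.prod J) * (I'.prod J'))]
  rw [Ideal.map_mul, Ideal.map_mul, map_fst_prod, map_fst_prod, map_snd_prod, map_snd_prod]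

lemma span_singleton_prod (d₁ : A) (d₂ : B) :
    (Ideal.span {((d₁, d₂) : A × B)}) = (Ideal.span {d₁}).prod (Ideal.span {d₂}) := by
  conv_lhs => rw [Ideal.ideal_prod_eq (Ideal.span {(d₁, d₂)})]
  rw [Ideal.map_span, Ideal.map_span, Set.image_singleton, Set.image_singleton]
  rfl

lemma nzd_prod {r : A} {s : B} (hr : r ∈ nonZeroDivisors A) (hs : s ∈ nonZeroDivisors B) :
    (r, s) ∈ nonZeroDivisors (A × B) := by
  rw [mem_nonZeroDivisors_iff_right] at hr hs ⊢
  rintro ⟨x, y⟩ hxy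
  rw [Prod.mk_mul_mk, Prod.mk_eq_zero] at hxy
  exact Prod.mk_eq_zero.mpr ⟨hr x hxy.1, hs y hxy.2⟩

lemma nzd_fst {r : A} {s : B} (h : (r, s) ∈ nonZeroDivisors (A × B)) :
    r ∈ nonZeroDivisors A := by
  rw [mem_nonZeroDivisors_iff_right] at h ⊢
  intro x hx
  have := h (x, 0) (by rw [Prod.mk_mul_mk, Prod.mk_eq_zero]; exact ⟨hx, zero_mul s⟩)
  exact (Prod.mk_eq_zero.mp this).1

lemma nzd_snd {r : A} {s : B} (h : (r, s) ∈ nonZeroDivisors (A × B)) :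
    s ∈ nonZeroDivisors B := by
  rw [mem_nonZeroDivisors_iff_right] at h ⊢
  intro x hx
  have := h (0, x) (by rw [Prod.mk_mul_mk, Prod.mk_eq_zero]; exact ⟨zero_mul r, hx⟩)
  exact (Prod.mk_eq_zero.mp this).2

lemma prod_top_fg {I : Ideal A} (hfg : I.FG) : (I.prod (⊤ : Ideal B)).FG := by
  classical
  obtain ⟨S, hS⟩ := hfg
  refine ⟨(S.image fun a => ((a, 0) : A × B)) ∪ {((0 : A), (1 : B))}, ?_⟩
  apply le_antisymm
  · rw [Ideal.span_le]
    intro x hx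
    simp only [Finset.coe_union, Finset.coe_image, Finset.coe_singleton, Set.mem_union,
      Set.mem_image, Set.mem_singleton_iff] at hx
    rcases hx with ⟨a, ha, rfl⟩ | rfl
    · exact (Ideal.mem_prod _ _).mpr ⟨hS ▸ Ideal.subset_span ha, trivial⟩
    · exact (Ideal.mem_prod _ _).mpr ⟨I.zero_mem, trivial⟩
  · rintro ⟨x, y⟩ hx
    have hxI : x ∈ I := ((Ideal.mem_prod _ _).mp hx).1
    have hy : ((0 : A), y) ∈ Ideal.span ((↑(S.image fun a => ((a, 0) : A × B)) ∪
        {((0 : A), (1 : B))} : Set (A × B))) := by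
      have h1 : ((0 : A), (1 : B)) ∈ Ideal.span ((↑(S.image fun a => ((a, 0) : A × B)) ∪
          {((0 : A), (1 : B))} : Set (A × B))) :=
        Ideal.subset_span (Set.mem_union_right _ rfl)
      have := Ideal.mul_mem_left _ ((0 : A), y) h1
      simpa using this
    have hx0 : ((x, (0 : B)) : A × B) ∈ Ideal.span ((↑(S.image fun a => ((a, 0) : A × B)) ∪
        {((0 : A), (1 : B))} : Set (A × B))) := by
      rw [← hS] at hxI
      refine Submodule.span_induction ?_ ?_ ?_ ?_ hxI
      · intro a ha
        refine Ideal.subset_span (Set.mem_union_left _ ?_)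
        simp only [Finset.coe_image, Set.mem_image, Finset.mem_coe]
        exact ⟨a, ha, rfl⟩
      · exact Submodule.zero_mem _
      · intro a b _ _ ha hb
        have := Ideal.add_mem _ ha hb
        simpa using this
      · intro r a _ ha
        have := Ideal.mul_mem_left _ ((r, 0) : A × B) ha
        simpa [smul_eq_mul] using this
    have := Ideal.add_mem _ hx0 hy
    simpa using this

lemma pruferAux_fst (h : PruferAux (A × B)) : PruferAux A := by
  intro I hfg hreg
  obtain ⟨r, hrI, hr⟩ := hreg
  obtain ⟨J, d, hd, hIJ⟩ := h (I.prod ⊤) (prod_top_fg hfg)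
    ⟨(r, 1), (Ideal.mem_prod _ _).mpr ⟨hrI, trivial⟩, nzd_prod hr (one_mem _)⟩
  refine ⟨J.map (RingHom.fst A B), d.1, ?_, ?_⟩
  · have : (d.1, d.2) ∈ nonZeroDivisors (A × B) := by simpa using hd
    exact nzd_fst this
  · have := congrArg (Ideal.map (RingHom.fst A B)) hIJ
    rwa [Ideal.map_mul, map_fst_prod, Ideal.map_span, Set.image_singleton] at this

lemma pruferAux_prod_iff : PruferAux (A × B) ↔ PruferAux A ∧ PruferAux B := by
  constructor
  · intro h
    exact ⟨pruferAux_fst h, pruferAux_fst (PruferAux.of_equiv RingEquiv.prodComm h)⟩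
  · rintro ⟨hA, hB⟩ K hfg ⟨r, hrK, hr⟩
    obtain ⟨Ja, da, hda, hJa⟩ := hA (K.map (RingHom.fst A B)) (hfg.map _)
      ⟨r.1, Ideal.mem_map_of_mem _ hrK, nzd_fst (by simpa using hr)⟩
    obtain ⟨Jb, db, hdb, hJb⟩ := hB (K.map (RingHom.snd A B)) (hfg.map _)
      ⟨r.2, Ideal.mem_map_of_mem _ hrK, nzd_snd (by simpa using hr)⟩
    refine ⟨Ja.prod Jb, (da, db), nzd_prod hda hdb, ?_⟩
    conv_lhs => rw [Ideal.ideal_prod_eq K]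
    rw [prod_mul_prod, hJa, hJb, span_singleton_prod]

end prod

theorem stmt13 {A B C : Type*} [CommRing A] [CommRing B] [CommRing C]
    (f : A →+* C) (g : B →+* C)
    (hf : ∃ a ∈ RingHom.ker f, a ∈ nonZeroDivisors A)
    (hg : ∃ b ∈ RingHom.ker g, b ∈ nonZeroDivisors B) :
    IsPruferRing (RingHom.eqLocus (f.comp (RingHom.fst A B)) (g.comp (RingHom.snd A B))) ↔
      (IsPruferRing A ∧ IsPruferRing B ∧
        RingHom.eqLocus (f.comp (RingHom.fst A B)) (g.comp (RingHom.snd A B)) = ⊤) := by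
  classical
  set F := f.comp (RingHom.fst A B) with hF
  set G := g.comp (RingHom.snd A B) with hG
  constructor
  · intro hP
    obtain ⟨a₀, ha₀f, ha₀⟩ := hf
    obtain ⟨b₀, hb₀g, hb₀⟩ := hg
    rw [RingHom.mem_ker] at ha₀f hb₀g
    have hPaux : PruferAux (RingHom.eqLocus F G) := pruferAux_iff.mp hP
    have hxmem : ((a₀, (0 : B)) : A × B) ∈ RingHom.eqLocus F G := by
      show f a₀ = g 0
      rw [ha₀f, map_zero]
    have hymem : (((0 : A), b₀) : A × B) ∈ RingHom.eqLocus F G := by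
      show f 0 = g b₀
      rw [hb₀g, map_zero]
    set R := RingHom.eqLocus F G
    set x : R := ⟨(a₀, 0), hxmem⟩ with hxdef
    set y : R := ⟨(0, b₀), hymem⟩ with hydef
    have hxy : x * y = 0 := by
      apply Subtype.ext
      show ((a₀, (0:B)) : A × B) * ((0 : A), b₀) = 0
      simp
    have hreg : x + y ∈ nonZeroDivisors R := by
      rw [mem_nonZeroDivisors_iff_right]
      intro z hz
      have hz' : (z : A × B) * ((a₀, (0:B)) + ((0:A), b₀)) = 0 := congrArg Subtype.val hz
      rw [Prod.mk_add_mk, add_zero, zero_add] at hz'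
      have h1 : (z : A × B).1 * a₀ = 0 := by
        have := congrArg Prod.fst hz'; simpa using this
      have h2 : (z : A × B).2 * b₀ = 0 := by
        have := congrArg Prod.snd hz'; simpa using this
      have hz1 : (z : A × B).1 = 0 := mem_nonZeroDivisors_iff_right.mp ha₀ _ h1
      have hz2 : (z : A × B).2 = 0 := mem_nonZeroDivisors_iff_right.mp hb₀ _ h2
      apply Subtype.ext
      exact Prod.ext hz1 hz2
    -- apply PruferAux to I = span {x, y}
    obtain ⟨J, d, hd, hIJ⟩ := hPaux (Ideal.span {x, y})
      ⟨{x, y}, by simp⟩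
      ⟨x + y, Ideal.add_mem _ (Ideal.subset_span (by simp)) (Ideal.subset_span (by simp)), hreg⟩
    have hdmem : d ∈ Ideal.span {x, y} * J := by
      rw [hIJ]; exact Ideal.mem_span_singleton_self d
    have hsplit : Ideal.span {x, y} * J =
        Submodule.span R {x} * J ⊔ Submodule.span R {y} * J := by
      rw [show ({x, y} : Set R) = insert x {y} from rfl, Ideal.span,
        Submodule.span_insert, Submodule.sup_mul]
    rw [hsplit] at hdmem
    obtain ⟨s, hs, t, ht, hst⟩ := Submodule.mem_sup.mp hdmem
    obtain ⟨p, hpJ, hp⟩ := Submodule.mem_span_singleton_mul.mp hs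
    obtain ⟨q, hqJ, hq⟩ := Submodule.mem_span_singleton_mul.mp ht
    -- s ∈ span {d}, so s = ε * d
    have hsI : s ∈ Ideal.span {d} := by
      rw [← hIJ]
      exact hp ▸ Ideal.mul_mem_mul (Ideal.subset_span (by simp)) hpJ
    obtain ⟨ε, hε⟩ := Ideal.mem_span_singleton'.mp hsI
    have hd' := mem_nonZeroDivisors_iff_right.mp hd
    -- ε * y = 0
    have h1 : ε * y = 0 := by
      apply hd'
      have : ε * y * d = x * y * p := by
        rw [show ε * y * d = ε * d * y from by ring, hε, ← hp]; ring
      rw [this, hxy, zero_mul]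
    -- (1 - ε) * x = 0
    have h2 : (1 - ε) * x = 0 := by
      apply hd'
      have hts : t = d - s := by rw [← hst]; ring
      have : (1 - ε) * x * d = x * y * q := by
        rw [show (1 - ε) * x * d = (d - ε * d) * x from by ring, hε,
          show d - s = t from hts.symm, ← hq]; ring
      rw [this, hxy, zero_mul]
    -- extract coordinates
    have hcoord1 : (ε : A × B).2 * b₀ = 0 := by
      have := congrArg Subtype.val h1
      have h' : (ε : A × B) * ((0 : A), b₀) = 0 := this
      have := congrArg Prod.snd h'
      simpa using this
    have he2 : (ε : A × B).2 = 0 := mem_nonZeroDivisors_iff_right.mp hb₀ _ hcoord1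
    have hcoord2 : (1 - (ε : A × B).1) * a₀ = 0 := by
      have := congrArg Subtype.val h2
      have h' : ((1 : A × B) - (ε : A × B)) * ((a₀ : A), (0 : B)) = 0 := this
      have := congrArg Prod.fst h'
      simpa using this
    have he1 : (ε : A × B).1 = 1 := by
      have := mem_nonZeroDivisors_iff_right.mp ha₀ _ hcoord2
      linear_combination -this
    -- 1 = 0 in C
    have hC : (1 : C) = 0 := by
      have hprop : f (ε : A × B).1 = g (ε : A × B).2 := ε.2
      rw [he1, he2, map_one, map_zero] at hprop
      exact hprop
    have hall : ∀ c : C, c = 0 := fun c => by rw [← mul_one c, hC, mul_zero]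
    have htop : RingHom.eqLocus F G = ⊤ := by
      ext z
      simp only [Subring.mem_top, iff_true]
      show F z = G z
      rw [hall (F z), hall (G z)]
    refine ⟨?_, ?_, htop⟩
    · exact pruferAux_iff.mpr (pruferAux_prod_iff.mp
        (PruferAux.of_equiv ((RingEquiv.subringCongr htop).trans Subring.topEquiv) hPaux)).1
    · exact pruferAux_iff.mpr (pruferAux_prod_iff.mp
        (PruferAux.of_equiv ((RingEquiv.subringCongr htop).trans Subring.topEquiv) hPaux)).2
  · rintro ⟨hA, hB, htop⟩
    refine pruferAux_iff.mpr ?_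
    exact PruferAux.of_equiv ((RingEquiv.subringCongr htop).trans Subring.topEquiv).symm
      (pruferAux_prod_iff.mpr ⟨pruferAux_iff.mp hA, pruferAux_iff.mp hB⟩)
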